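/- Let k > 0, a > 0, T₁ > T∞ ≥ 0 be real numbers and let 0 < α < 1. Define T(x) = (T₁ − T∞)·x^(−α) + T∞ and f(x) = (k·x + a)·T(x) for x > 0. Then the second derivative satisfies f″(x) > 0 for every real x with 0 < x ≤ (a/k)·(α/(1 − α)); that is, f is strictly convex on the interval (0, (a/k)·(α/(1 − α))]. -/

import Mathlib

open Set


/-- With `T x = (T₁ - T∞) * x ^ (-α) + T∞` and
`f x = (k·x + a)·T x` (`k, a > 0`, `T₁ > T∞ ≥ 0`, `0 < α < 1`),
the second derivative `f″(x)` is strictly positive for every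
`0 < x ≤ (a/k)·(α/(1 − α))`; that is, `f` is strictly convex on the
interval `(0, (a/k)·(α/(1 − α))]`. -/
theorem stmt7 (k a T₁ Tinf α : ℝ) (hk : 0 < k) (ha : 0 < a)
    (hTinf : 0 ≤ Tinf) (hT₁ : Tinf < T₁) (hα0 : 0 < α) (hα1 : α < 1)
    (T f : ℝ → ℝ)
    (hT : ∀ x : ℝ, 0 < x → T x = (T₁ - Tinf) * x ^ (-α) + Tinf)
    (hf : ∀ x : ℝ, 0 < x → f x = (k * x + a) * T x) :
    (∀ x : ℝ, 0 < x → x ≤ (a / k) * (α / (1 - α)) →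
        0 < deriv (deriv f) x) ∧
      StrictConvexOn ℝ (Set.Ioc (0 : ℝ) ((a / k) * (α / (1 - α)))) f := by
  set c := T₁ - Tinf with hc_def
  have hc : 0 < c := sub_pos.2 hT₁
  set b := (a / k) * (α / (1 - α)) with hb_def
  have h1α : 0 < 1 - α := by linarith
  have hb : 0 < b := by rw [hb_def]; positivity
  set g : ℝ → ℝ := fun x => (k * x + a) * (c * x ^ (-α) + Tinf) with hg_def
  have hfg : ∀ x : ℝ, 0 < x → f x = g x := fun x hx => by
    rw [hf x hx, hT x hx]
  -- derivative of g
  set G : ℝ → ℝ := fun x =>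
    k * (c * x ^ (-α) + Tinf) + (k * x + a) * (c * (-α) * x ^ (-α - 1)) with hG_def
  have hgG : ∀ x : ℝ, 0 < x → HasDerivAt g (G x) x := by
    intro x hx
    have h1 : HasDerivAt (fun y : ℝ => k * y + a) k x := by
      simpa using ((hasDerivAt_id x).const_mul k).add_const a
    have h2 : HasDerivAt (fun y : ℝ => c * y ^ (-α) + Tinf)
        (c * (-α) * x ^ (-α - 1)) x := by
      have := (Real.hasDerivAt_rpow_const (p := -α) (Or.inl hx.ne')).const_mul c
      simpa [mul_assoc] using this.add_const Tinf
    simpa [hg_def, hG_def, Pi.mul_def] using h1.mul h2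
  set H : ℝ → ℝ := fun x =>
    k * (c * (-α) * x ^ (-α - 1)) +
      (k * (c * (-α) * x ^ (-α - 1)) +
        (k * x + a) * (c * (-α) * (-α - 1) * x ^ (-α - 1 - 1))) with hH_def
  have hGH : ∀ x : ℝ, 0 < x → HasDerivAt G (H x) x := by
    intro x hx
    have h1 : HasDerivAt (fun y : ℝ => k * (c * y ^ (-α) + Tinf))
        (k * (c * (-α) * x ^ (-α - 1))) x := by
      have := (Real.hasDerivAt_rpow_const (p := -α) (Or.inl hx.ne')).const_mul c
      have := (this.add_const Tinf).const_mul k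
      simpa [mul_assoc] using this
    have h2a : HasDerivAt (fun y : ℝ => k * y + a) k x := by
      simpa using ((hasDerivAt_id x).const_mul k).add_const a
    have h2b : HasDerivAt (fun y : ℝ => c * (-α) * y ^ (-α - 1))
        (c * (-α) * (-α - 1) * x ^ (-α - 1 - 1)) x := by
      have := (Real.hasDerivAt_rpow_const (p := -α - 1) (Or.inl hx.ne')).const_mul
        (c * (-α))
      simpa [mul_assoc] using this
    simpa [hG_def, hH_def, Pi.mul_def, Pi.add_def] using h1.add (h2a.mul h2b)
  -- deriv f = G on Ioi 0
  have hderiv1 : ∀ x : ℝ, 0 < x → deriv f x = G x := by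
    intro x hx
    have heq : f =ᶠ[nhds x] g :=
      Filter.eventuallyEq_of_mem (Ioi_mem_nhds hx) fun y hy => hfg y hy
    rw [heq.deriv_eq, (hgG x hx).deriv]
  have hderiv2 : ∀ x : ℝ, 0 < x → deriv (deriv f) x = H x := by
    intro x hx
    have heq : deriv f =ᶠ[nhds x] G :=
      Filter.eventuallyEq_of_mem (Ioi_mem_nhds hx) fun y hy => hderiv1 y hy
    rw [heq.deriv_eq, (hGH x hx).deriv]
  -- positivity of H
  have hHpos : ∀ x : ℝ, 0 < x → x ≤ b → 0 < H x := by
    intro x hx hxb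
    have hx2 : (0:ℝ) < x ^ (-α - 1 - 1) := Real.rpow_pos_of_pos hx _
    have hsplit : x ^ (-α - 1) = x ^ (-α - 1 - 1) * x := by
      have h := Real.rpow_add hx (-α - 1 - 1) 1
      rw [Real.rpow_one] at h
      rw [← h]; congr 1; ring
    have hkey : H x = c * α * x ^ (-α - 1 - 1) * (a * (α + 1) - k * (1 - α) * x) := by
      simp only [hH_def, hsplit]; ring
    have hbound : k * (1 - α) * x ≤ a * α := by
      have heq : k * (1 - α) * b = a * α := by
        rw [hb_def]; field_simp
      calc k * (1 - α) * x ≤ k * (1 - α) * b :=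
            mul_le_mul_of_nonneg_left hxb (by positivity)
        _ = a * α := heq
    rw [hkey]
    have : 0 < a * (α + 1) - k * (1 - α) * x := by nlinarith
    positivity
  refine ⟨fun x hx hxb => (hderiv2 x hx) ▸ hHpos x hx hxb, ?_⟩
  -- strict convexity
  have hconv : Convex ℝ (Ioc (0:ℝ) b) := convex_Ioc 0 b
  have hcont : ContinuousOn f (Ioc (0:ℝ) b) := by
    have hgcont : ContinuousOn g (Ioc (0:ℝ) b) := by
      have h1 : ContinuousOn (fun x : ℝ => x ^ (-α)) (Ioc (0:ℝ) b) :=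
        ContinuousOn.rpow_const continuousOn_id fun x hx => Or.inl (ne_of_gt hx.1)
      have h2 : ContinuousOn (fun x : ℝ => k * x + a) (Ioc (0:ℝ) b) := by fun_prop
      exact h2.mul
        ((continuousOn_const.mul h1).add continuousOn_const)
    exact hgcont.congr fun x hx => hfg x hx.1
  apply strictConvexOn_of_deriv2_pos hconv hcont
  intro x hx
  rw [interior_Ioc] at hx
  have := hHpos x hx.1 hx.2.le
  simpa [Function.iterate_succ, Function.comp, hderiv2 x hx.1] using this
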